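/- Let N ≥ 2 be an integer and R > 0. There exists a constant C ≥ 0 such that for all real numbers η_1, …, η_N with |η_k| ≤ R for every k, one has |F(1 − Σ_{k=1}^N η_k) − Σ_{k=1}^N F(1 − η_k)| ≤ C (S^{2,N} + S^{3,N} + B^N + C^N)(|η_1|, …, |η_N|). -/

import Mathlib

open Real MeasureTheory

/-- Expansion of `F(1 - Ση_k) - ΣF(1 - η_k)` in terms of the coupled
symmetric quantities `S^{2,N}, S^{3,N}, B^N, C^N`. -/
theorem stmt_7 (f : ℝ → ℝ) (hf : ContDiff ℝ 3 f) (hf1 : f 1 = 0)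
    (F : ℝ → ℝ) (hF : ∀ r, F r = ∫ ρ in r..1, f ρ)
    (N : ℕ) (hN : 2 ≤ N) (R : ℝ) (hR : 0 < R) :
    ∃ C : ℝ, 0 ≤ C ∧ ∀ η : Fin N → ℝ, (∀ k, |η k| ≤ R) →
      |F (1 - ∑ k, η k) - ∑ k, F (1 - η k)| ≤
        C * ((∑ i : Fin N, ∑ j : Fin N, if i < j then |η i| * |η j| else 0)
          + (∑ i : Fin N, ∑ j : Fin N, ∑ l : Fin N,
              if i < j ∧ j < l then |η i| * |η j| * |η l| else 0)
          + (∑ i : Fin N, ∑ j : Fin N, if j ≠ i then |η i| ^ 2 * |η j| else 0)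
          + (∑ i : Fin N, ∑ j : Fin N, if j ≠ i then |η i| ^ 3 * |η j| else 0)) := by
  classical
  set M : ℝ := (N : ℝ) * R with hM
  have hN1 : (1 : ℝ) ≤ (N : ℝ) := by exact_mod_cast Nat.one_le_of_lt hN
  have hMpos : 0 < M := by
    have : (0:ℝ) < N := lt_of_lt_of_le one_pos hN1
    exact mul_pos this hR
  have hRM : R ≤ M := by nlinarith
  -- bound the derivative on a compact interval
  obtain ⟨L, hL⟩ := (isCompact_Icc (a := 1 - 2*M) (b := 1 + 2*M)).exists_bound_of_continuousOn
      ((hf.continuous_deriv (by norm_num)).continuousOn)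
  set C0 : ℝ := max L 0 with hC0def
  have hC0 : 0 ≤ C0 := le_max_right _ _
  refine ⟨C0, hC0, ?_⟩
  have hL' : ∀ x ∈ Set.Icc (1-2*M) (1+2*M), ‖deriv f x‖ ≤ C0 :=
    fun x hx => (hL x hx).trans (le_max_left _ _)
  have hdiff : ∀ x ∈ Set.Icc (1-2*M) (1+2*M), DifferentiableAt ℝ f x :=
    fun x _ => (hf.differentiable (by norm_num)).differentiableAt
  have lip : ∀ a ∈ Set.Icc (1-2*M) (1+2*M), ∀ b ∈ Set.Icc (1-2*M) (1+2*M),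
      |f b - f a| ≤ C0 * |b - a| := by
    intro a ha b hb
    simpa [Real.norm_eq_abs] using
      (convex_Icc (1-2*M) (1+2*M)).norm_image_sub_le_of_norm_deriv_le hdiff hL' ha hb
  have hfc : Continuous f := hf.continuous
  -- the key pairwise bound
  have key : ∀ s t : ℝ, |s| ≤ M → |t| ≤ M →
      |F (1 - s - t) - F (1 - s) - F (1 - t)| ≤ C0 * |s| * |t| := by
    intro s t hs ht
    have hs1 : -M ≤ s := (abs_le.mp hs).1
    have hs2 : s ≤ M := (abs_le.mp hs).2
    have ht1 : -M ≤ t := (abs_le.mp ht).1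
    have ht2 : t ≤ M := (abs_le.mp ht).2
    have int1 : IntervalIntegrable f MeasureTheory.volume (1-s-t) (1-s) :=
      hfc.intervalIntegrable _ _
    have int2 : IntervalIntegrable f MeasureTheory.volume (1-s) 1 :=
      hfc.intervalIntegrable _ _
    have hadd : (∫ x in (1-s-t)..(1-s), f x) + ∫ x in (1-s)..1, f x
        = ∫ x in (1-s-t)..1, f x :=
      intervalIntegral.integral_add_adjacent_intervals int1 int2
    have hcomp : (∫ x in (1-t)..1, f (x - s)) = ∫ x in (1-s-t)..(1-s), f x := by
      rw [intervalIntegral.integral_comp_sub_right f s]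
      norm_num [sub_sub, add_comm]
    have hsub : (∫ x in (1-t)..1, (f (x - s) - f x))
        = (∫ x in (1-t)..1, f (x - s)) - ∫ x in (1-t)..1, f x := by
      exact intervalIntegral.integral_sub
        ((hfc.comp (continuous_id.sub continuous_const)).intervalIntegrable _ _)
        (hfc.intervalIntegrable _ _)
    have hint : F (1 - s - t) - F (1 - s) - F (1 - t)
        = ∫ x in (1-t)..1, (f (x - s) - f x) := by
      rw [hF, hF, hF, hsub, hcomp]
      linarith
    rw [hint]
    have hb : ∀ x ∈ Set.uIoc (1-t) 1, ‖f (x - s) - f x‖ ≤ C0 * |s| := by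
      intro x hx
      have hx1 : min (1-t) 1 < x := hx.1
      have hx2 : x ≤ max (1-t) 1 := hx.2
      have hxl : 1 - M ≤ x := by
        have : 1 - M ≤ min (1-t) 1 := le_min (by linarith) (by linarith)
        linarith
      have hxr : x ≤ 1 + M := by
        have : max (1-t) 1 ≤ 1 + M := max_le (by linarith) (by linarith)
        linarith
      have hmem1 : x ∈ Set.Icc (1-2*M) (1+2*M) := ⟨by linarith, by linarith⟩
      have hmem2 : x - s ∈ Set.Icc (1-2*M) (1+2*M) := ⟨by linarith, by linarith⟩
      have := lip x hmem1 (x - s) hmem2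
      rw [Real.norm_eq_abs]
      calc |f (x - s) - f x| ≤ C0 * |x - s - x| := this
        _ = C0 * |s| := by rw [show x - s - x = -s by ring, abs_neg]
    calc |∫ x in (1-t)..1, (f (x - s) - f x)| ≤ (C0 * |s|) * |1 - (1-t)| :=
          intervalIntegral.norm_integral_le_of_norm_le_const hb
      _ = C0 * |s| * |t| := by rw [show (1:ℝ) - (1-t) = t by ring]
  intro η hη
  have habs : ∀ u : Finset (Fin N), |∑ k ∈ u, η k| ≤ M := by
    intro u
    calc |∑ k ∈ u, η k| ≤ ∑ k ∈ u, |η k| := Finset.abs_sum_le_sum_abs _ _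
      _ ≤ ∑ _k ∈ u, R := Finset.sum_le_sum (fun k _ => hη k)
      _ = (u.card : ℝ) * R := by rw [Finset.sum_const, nsmul_eq_mul]
      _ ≤ M := by
          have hc : (u.card : ℝ) ≤ (N : ℝ) := by
            exact_mod_cast (Finset.card_le_univ u).trans_eq (Finset.card_fin N)
          exact mul_le_mul_of_nonneg_right hc hR.le
  have habs' : ∀ u : Finset (Fin N), |∑ k ∈ u, η k| ≤ ∑ k ∈ u, |η k| :=
    fun u => Finset.abs_sum_le_sum_abs _ _
  have hF1 : F 1 = 0 := by rw [hF, intervalIntegral.integral_same]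
  have main : ∀ u : Finset (Fin N),
      |F (1 - ∑ k ∈ u, η k) - ∑ k ∈ u, F (1 - η k)| ≤
        C0 * ∑ i ∈ u, ∑ j ∈ u, (if i < j then |η i| * |η j| else 0) := by
    intro u
    induction u using Finset.cons_induction with
    | empty => simp [hF1]
    | cons a u ha ih =>
      rw [Finset.sum_cons, Finset.sum_cons]
      have h1 := key (∑ k ∈ u, η k) (η a) (habs u) ((hη a).trans hRM)
      have tri : |F (1 - (η a + ∑ k ∈ u, η k)) - (F (1 - η a) + ∑ k ∈ u, F (1 - η k))|
          ≤ |F (1 - (∑ k ∈ u, η k) - η a) - F (1 - ∑ k ∈ u, η k) - F (1 - η a)|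
            + |F (1 - ∑ k ∈ u, η k) - ∑ k ∈ u, F (1 - η k)| := by
        have he : 1 - (η a + ∑ k ∈ u, η k) = 1 - (∑ k ∈ u, η k) - η a := by ring
        have hX : F (1 - (η a + ∑ k ∈ u, η k)) - (F (1 - η a) + ∑ k ∈ u, F (1 - η k))
            = (F (1 - (∑ k ∈ u, η k) - η a) - F (1 - ∑ k ∈ u, η k) - F (1 - η a))
              + (F (1 - ∑ k ∈ u, η k) - ∑ k ∈ u, F (1 - η k)) := by
          rw [he]; ring
        rw [hX]
        exact abs_add_le _ _
      have hcross : C0 * |∑ k ∈ u, η k| * |η a| ≤ C0 * ∑ j ∈ u, (|η a| * |η j|) := by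
        have h2 : |∑ k ∈ u, η k| * |η a| ≤ (∑ k ∈ u, |η k|) * |η a| :=
          mul_le_mul_of_nonneg_right (habs' u) (abs_nonneg _)
        have h3 : (∑ k ∈ u, |η k|) * |η a| = ∑ j ∈ u, (|η a| * |η j|) := by
          rw [Finset.sum_mul]
          exact Finset.sum_congr rfl (fun j _ => mul_comm _ _)
        calc C0 * |∑ k ∈ u, η k| * |η a| = C0 * (|∑ k ∈ u, η k| * |η a|) := by ring
          _ ≤ C0 * ((∑ k ∈ u, |η k|) * |η a|) := mul_le_mul_of_nonneg_left h2 hC0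
          _ = C0 * ∑ j ∈ u, (|η a| * |η j|) := by rw [h3]
      have hsum_cons : ∑ i ∈ Finset.cons a u ha, ∑ j ∈ Finset.cons a u ha,
            (if i < j then |η i| * |η j| else 0)
          = (∑ j ∈ u, (|η a| * |η j|))
            + ∑ i ∈ u, ∑ j ∈ u, (if i < j then |η i| * |η j| else 0) := by
        simp only [Finset.sum_cons, lt_irrefl, if_false, Finset.sum_add_distrib, zero_add]
        have hperm : ∀ j ∈ u, (if a < j then |η a| * |η j| else 0)
            + (if j < a then |η j| * |η a| else 0) = |η a| * |η j| := by
          intro j hj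
          have hja : j ≠ a := fun h => ha (h ▸ hj)
          rcases lt_or_gt_of_ne hja with h | h
          · rw [if_neg (asymm h), if_pos h, zero_add, mul_comm]
          · rw [if_pos h, if_neg (asymm h), add_zero]
        have := Finset.sum_congr rfl hperm
        rw [Finset.sum_add_distrib] at this
        linarith [this]
      rw [hsum_cons, mul_add]
      calc |F (1 - (η a + ∑ k ∈ u, η k)) - (F (1 - η a) + ∑ k ∈ u, F (1 - η k))|
          ≤ |F (1 - (∑ k ∈ u, η k) - η a) - F (1 - ∑ k ∈ u, η k) - F (1 - η a)|
            + |F (1 - ∑ k ∈ u, η k) - ∑ k ∈ u, F (1 - η k)| := tri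
        _ ≤ C0 * |∑ k ∈ u, η k| * |η a|
            + C0 * ∑ i ∈ u, ∑ j ∈ u, (if i < j then |η i| * |η j| else 0) := add_le_add h1 ih
        _ ≤ C0 * ∑ j ∈ u, (|η a| * |η j|)
            + C0 * ∑ i ∈ u, ∑ j ∈ u, (if i < j then |η i| * |η j| else 0) :=
          add_le_add hcross le_rfl
  have hmain := main Finset.univ
  have hS3 : 0 ≤ ∑ i : Fin N, ∑ j : Fin N, ∑ l : Fin N,
      (if i < j ∧ j < l then |η i| * |η j| * |η l| else 0) := by
    refine Finset.sum_nonneg fun i _ => Finset.sum_nonneg fun j _ =>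
      Finset.sum_nonneg fun l _ => ?_
    split <;> positivity
  have hB : 0 ≤ ∑ i : Fin N, ∑ j : Fin N, (if j ≠ i then |η i| ^ 2 * |η j| else 0) := by
    refine Finset.sum_nonneg fun i _ => Finset.sum_nonneg fun j _ => ?_
    split <;> positivity
  have hC : 0 ≤ ∑ i : Fin N, ∑ j : Fin N, (if j ≠ i then |η i| ^ 3 * |η j| else 0) := by
    refine Finset.sum_nonneg fun i _ => Finset.sum_nonneg fun j _ => ?_
    split <;> positivity
  calc |F (1 - ∑ k, η k) - ∑ k, F (1 - η k)|
      ≤ C0 * ∑ i : Fin N, ∑ j : Fin N, (if i < j then |η i| * |η j| else 0) := hmain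
    _ ≤ C0 * ((∑ i : Fin N, ∑ j : Fin N, if i < j then |η i| * |η j| else 0)
          + (∑ i : Fin N, ∑ j : Fin N, ∑ l : Fin N,
              if i < j ∧ j < l then |η i| * |η j| * |η l| else 0)
          + (∑ i : Fin N, ∑ j : Fin N, if j ≠ i then |η i| ^ 2 * |η j| else 0)
          + (∑ i : Fin N, ∑ j : Fin N, if j ≠ i then |η i| ^ 3 * |η j| else 0)) := by
        apply mul_le_mul_of_nonneg_left _ hC0
        linarith
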